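/- Let M ≥ 1 be an integer, λ > 1 and 0 < ε < 1 with ε < λ−1 and λ(1−ε) > 1. Let S be an (M,λ,ε,W_N)-minimizing set of conjugacy classes in F_N. Then for any [u] ∈ S and any φ ∈ Out(F_N) with ‖φ(u)‖_A ≤ ‖u‖_A, we have φ([u]) ∈ S. -/
import Mathlib


/-- Abstract model: `G` plays the role of `Out(F_N)` acting on the set `C` of
conjugacy classes, `len` is the cyclically reduced length `‖·‖_A`, and `W ⊆ G`
is the set of nontrivial Whitehead moves.  `S` is an `(M,λ,ε,W_N)`-minimizing
set: classes of nontrivial elements, at most `M` of them, all in one orbit,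
pairwise length ratios in `[1-ε,1+ε]`, and every Whitehead move `τ ∈ W` either
keeps an element of `S` inside `S` or stretches its length by at least `λ`. -/
def IsWMinimizingSet {G C : Type*} [Group G] [MulAction G C] (W : Set G)
    (len : C → ℕ) (M : ℕ) (lam eps : ℝ) (S : Finset C) : Prop :=
  (∀ u ∈ S, 0 < len u) ∧
  S.card ≤ M ∧
  (∀ u ∈ S, ∀ u' ∈ S, ∃ φ : G, φ • u = u') ∧
  (∀ u ∈ S, ∀ u' ∈ S,
      (1 - eps) * (len u : ℝ) ≤ (len u' : ℝ) ∧ (len u' : ℝ) ≤ (1 + eps) * (len u : ℝ)) ∧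
  (∀ u ∈ S, ∀ τ ∈ W, τ • u ∉ S → lam * (len u : ℝ) ≤ (len (τ • u) : ℝ))

/-- if `S` is `(M,λ,ε,W_N)`-minimizing (with `0<ε<1`, `ε<λ-1`,
`λ(1-ε)>1`), then for `[u] ∈ S` and `φ ∈ Out(F_N)` with `‖φ(u)‖_A ≤ ‖u‖_A` we
have `φ([u]) ∈ S`.  The peak-reduction theorem (Lyndon–Schupp, Prop. 4.17) is
assumed as the hypothesis `hpeak`: whenever `‖φ(w)‖_A ≤ ‖w‖_A`, `φ([w])` is
reachable from `[w]` by a chain of Whitehead moves whose intermediate classes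
all have length `≤ ‖w‖_A`. -/
theorem stmt1 {G C : Type*} [Group G] [MulAction G C] (W : Set G)
    (len : C → ℕ) (M : ℕ) (lam eps : ℝ)
    (hM : 1 ≤ M) (hlam : 1 < lam) (heps0 : 0 < eps) (heps1 : eps < 1)
    (heps : eps < lam - 1) (hle : 1 < lam * (1 - eps))
    (hpeak : ∀ (w : C) (φ : G), len (φ • w) ≤ len w →
      ∃ (k : ℕ) (c : ℕ → C), c 0 = w ∧ c k = φ • w ∧
        (∀ i < k, ∃ τ ∈ W, τ • c i = c (i + 1)) ∧
        (∀ i ≤ k, len (c i) ≤ len w))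
    (S : Finset C) (hS : IsWMinimizingSet W len M lam eps S)
    (u : C) (hu : u ∈ S) (φ : G) (hφ : len (φ • u) ≤ len u) :
    φ • u ∈ S := by
  obtain ⟨hpos, _, _, hratio, hstretch⟩ := hS
  obtain ⟨k, c, hc0, hck, hstep, hlen⟩ := hpeak u φ hφ
  have key : ∀ i ≤ k, c i ∈ S := by
    intro i
    induction i with
    | zero => intro _; rw [hc0]; exact hu
    | succ n ih =>
      intro hn
      have hnk : n ≤ k := Nat.le_of_succ_le hn
      have hcn : c n ∈ S := ih hnk
      obtain ⟨τ, hτW, hτ⟩ := hstep n hn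
      by_contra hnot
      rw [← hτ] at hnot
      have h1 := hstretch (c n) hcn τ hτW hnot
      have h2 : (1 - eps) * (len u : ℝ) ≤ (len (c n) : ℝ) := (hratio u hu (c n) hcn).1
      have h3 : (len (τ • c n) : ℝ) ≤ (len u : ℝ) := by
        rw [hτ]; exact_mod_cast hlen (n+1) hn
      have hlu : (0:ℝ) < (len u : ℝ) := by exact_mod_cast hpos u hu
      have : lam * ((1 - eps) * (len u : ℝ)) ≤ lam * (len (c n) : ℝ) :=
        mul_le_mul_of_nonneg_left h2 (by linarith)
      nlinarith
  have := key k le_rfl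
  rwa [hck] at this
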